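/- Let A be a finite alphabet, X ⊆ A^ℤ a subshift, and f ∈ B(X) a function of bounded total oscillations. For every ε > 0 there exists N ∈ ℕ such that for all m ≥ N: (1) sup{ ∑_{i=1}^{m} |f(σ^i x) − f(σ^i y)| : x, y ∈ X with x_k = y_k for all k ∈ {1,…,m} } ≤ mε, and (2) sup{ ∑_{j∉{1,…,m}} |f(σ^j x) − f(σ^j y)| : x, y ∈ X with x_k = y_k for all k ∉ {1,…,m} } ≤ mε. -/

import Mathlib

open Filter Topology MeasureTheory ENNReal
open scoped Classical

noncomputable section

namespace AB

/-- The (α,β)-transformation `T(x) = βx + α − ⌊βx + α⌋`. -/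
def T (α β : ℝ) (x : ℝ) : ℝ := β * x + α - ⌊β * x + α⌋

/-- `λ = ⌈α+β⌉ − 1`, as a natural number. -/
def lamNat (α β : ℝ) : ℕ := (⌈α + β⌉ - 1).toNat

/-- The digit of `x ∈ [0,1)`: the index `k` with `x ∈ J_k`, namely `⌊βx + α⌋`. -/
def digit (α β : ℝ) (x : ℝ) : ℕ := (⌊β * x + α⌋).toNat

/-- The (α,β)-expansion of `x`. -/
def iSeq (α β : ℝ) (x : ℝ) : ℕ → ℕ := fun n => digit α β ((T α β)^[n] x)

/-- The one-sided (α,β)-shift: closure (in the product topology) of the set of expansions. -/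
def Xab (α β : ℝ) : Set (ℕ → ℕ) :=
  closure {s | ∃ x ∈ Set.Ico (0 : ℝ) 1, s = iSeq α β x}

/-- Word of given length read in a one-sided sequence starting at position `k`. -/
def wordN (s : ℕ → ℕ) (k len : ℕ) : List ℕ := (List.range len).map fun i => s (k + i)

/-- The language of the (α,β)-shift: finite words appearing in points of `Xab`. -/
def Lang (α β : ℝ) : Set (List ℕ) :=
  {w | ∃ s ∈ Xab α β, ∃ k : ℕ, w = wordN s k w.length}

/-- `a = i_{α,β}(0)`. -/
def aSeq (α β : ℝ) : ℕ → ℕ := iSeq α β 0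

/-- The prefix of length `l` of a sequence, as a word. -/
def pre (s : ℕ → ℕ) (l : ℕ) : List ℕ := (List.range l).map s

/-- Lexicographic (non-strict) order on words. -/
def wordLe (u v : List ℕ) : Prop := u = v ∨ List.Lex (· < ·) u v

/-- Lexicographic (non-strict) order on one-sided sequences. -/
def seqLe (x y : ℕ → ℕ) : Prop :=
  x = y ∨ ∃ n : ℕ, (∀ i < n, x i = y i) ∧ x n < y n

/-- The largest `k ≤ |w|` such that the length-`k` suffix of `w` equals the length-`k`
prefix of `s` (this is `k1` for `s = a` and `k2` for `s = b`). -/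
def kk (s : ℕ → ℕ) (w : List ℕ) : ℕ :=
  Nat.findGreatest (fun k => w.drop (w.length - k) = pre s k) w.length

/-- The set of finite prefixes of a sequence (`P^a`, `P^b`). -/
def Pset (s : ℕ → ℕ) : Set (List ℕ) := {u | ∃ l : ℕ, u = pre s l}

/-- The distinguished suffix `s(w)`. -/
def sWord (a b : ℕ → ℕ) (w : List ℕ) : List ℕ :=
  if kk b w < kk a w then w.drop (w.length - kk a w)
  else if kk a w < kk b w then w.drop (w.length - kk b w)
  else []

/-- The hat operation on `P = P^a ∪ P^b` (for `β > 3`, `α = 1/β`). -/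
def hatP (a b : ℕ → ℕ) (lam : ℕ) (u : List ℕ) : List ℕ :=
  if u = [] then []
  else if u ∈ Pset a then u.dropLast ++ [u.getLast?.getD 0 + 1]
  else if 3 ≤ u.getLast?.getD 0 then u.dropLast ++ [u.getLast?.getD 0 - 1]
  else
    (u.set (u.length - kk a u.dropLast - 2) (u.getD (u.length - kk a u.dropLast - 2) 0 - 1)).set
      (u.length - kk a u.dropLast - 1) (lam - 1)

/-- `ŵ` for `w = v·s(w)`: replace the distinguished suffix by its hat. -/
def hatW (a b : ℕ → ℕ) (lam : ℕ) (w : List ℕ) : List ℕ :=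
  w.take (w.length - (sWord a b w).length) ++ hatP a b lam (sWord a b w)

/-- `w̃`: the hat operation applied twice. -/
def tildeW (a b : ℕ → ℕ) (lam : ℕ) (w : List ℕ) : List ℕ :=
  hatW a b lam (hatW a b lam w)

/-- `z(u)` for `u ∈ P^b`. -/
def zP (a b : ℕ → ℕ) (u : List ℕ) : ℕ :=
  if u = [] then 0
  else sSup ({k : ℕ | (u ++ pre (fun i => a (kk a u + i)) k) ∈ Pset b} ∪ {0})

/-- `z(w)` for a word `w` in the language. -/
def zW (a b : ℕ → ℕ) (w : List ℕ) : ℕ :=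
  if kk a w < kk b w then zP a b (w.drop (w.length - kk b w)) else 0

/-- `z̄(n) = max{z(u) : u prefix of b, |u| ≤ n}`. -/
def zbar (a b : ℕ → ℕ) (n : ℕ) : ℕ :=
  (Finset.range (n + 1)).sup fun l => zP a b (pre b l)

/-- The natural extension `Σ^{α,β}`. -/
def SigmaAB (α β : ℝ) : Set (ℤ → ℕ) :=
  {x | ∀ k : ℤ, (fun n : ℕ => x (k + n)) ∈ Xab α β}

/-- `σ^j` on two-sided sequences. -/
def shiftI {A : Type*} (j : ℤ) (x : ℤ → A) : ℤ → A := fun n => x (n + j)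

/-- Word of given length read in a two-sided sequence starting at position `k`. -/
def wordZ (x : ℤ → ℕ) (k : ℤ) (len : ℕ) : List ℕ := (List.range len).map fun i => x (k + i)

/-- The map `g : L^{α,β} → {0,1}`. -/
def gW (a b : ℕ → ℕ) (w : List ℕ) : ℕ :=
  if kk a w = 0 ∧ 0 < kk b w ∧ b (kk b w) ≤ 1 then 0 else 1

/-- `w^♯`: the word `w` placed at positions `k,…,k+|w|−1`, followed by `g(w)` at
position `k+|w|`, and `1` at all other positions. -/
def wSharp (a b : ℕ → ℕ) (k : ℤ) (w : List ℕ) : ℤ → ℕ :=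
  fun j => if k ≤ j ∧ j < k + w.length then w.getD (j - k).toNat 1
           else if j = k + w.length then gW a b w else 1

/-- The finite approximation sets `E^n ⊆ Σ^{α,β}`. -/
def En (α β : ℝ) (b : ℕ → ℕ) (n : ℕ) : Set (ℤ → ℕ) :=
  {x | wordZ x (-(n : ℤ)) (2 * n + 1) ∈ Lang α β ∧
       x ((n : ℤ) + 1) = gW (aSeq α β) b (wordZ x (-(n : ℤ)) (2 * n + 1)) ∧
       ∀ j : ℤ, j < -(n : ℤ) ∨ (n : ℤ) + 1 < j → x j = 1}

/-- `s(x_k^-) = ε` for the left-infinite word `x_{(-∞,k-1]}`: no nonempty suffix of it is a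
prefix of `a` or of `b`. -/
def leftStar (a b : ℕ → ℕ) (x : ℤ → ℕ) (k : ℤ) : Prop :=
  (∀ K : ℕ, 1 ≤ K → ¬ ∀ i : ℕ, i < K → x (k - K + i) = a i) ∧
  (∀ K : ℕ, 1 ≤ K → ¬ ∀ i : ℕ, i < K → x (k - K + i) = b i)

/-- `E^n_{[k,l]}(v)`. -/
def EnCyl (α β : ℝ) (b : ℕ → ℕ) (n : ℕ) (k l : ℤ) (v : List ℕ) : Set (ℤ → ℕ) :=
  {x ∈ En α β b n | wordZ x k (l - k + 1).toNat = v}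

/-- `E^{*,n}_{[k,l]}(v)`. -/
def EnCylStar (α β : ℝ) (b : ℕ → ℕ) (n : ℕ) (k l : ℤ) (v : List ℕ) : Set (ℤ → ℕ) :=
  {x ∈ EnCyl α β b n k l v | leftStar (aSeq α β) b x k}

/-- The Birkhoff sum `∑_{j=−n}^{n} φ(σ^j x)`. -/
def birkhoff (φ : (ℤ → ℕ) → ℝ) (n : ℕ) (x : ℤ → ℕ) : ℝ :=
  ∑ j ∈ Finset.Icc (-(n : ℤ)) (n : ℤ), φ (shiftI j x)

/-- `Ξ^n_{[k,l]}(v)`. -/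
def Xi (α β : ℝ) (b : ℕ → ℕ) (φ : (ℤ → ℕ) → ℝ) (n : ℕ) (k l : ℤ) (v : List ℕ) : ℝ :=
  ∑' x : (EnCyl α β b n k l v), Real.exp (birkhoff φ n x.1)

/-- `Ξ^{*,n}_{[k,l]}(v)`. -/
def XiStar (α β : ℝ) (b : ℕ → ℕ) (φ : (ℤ → ℕ) → ℝ) (n : ℕ) (k l : ℤ) (v : List ℕ) : ℝ :=
  ∑' x : (EnCylStar α β b n k l v), Real.exp (birkhoff φ n x.1)

/-- `δ_i(f)`, as an extended nonnegative real. -/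
def oscE {A : Type*} (f : (ℤ → A) → ℝ) (i : ℤ) : ℝ≥0∞ :=
  ⨆ (x : ℤ → A) (y : ℤ → A) (_ : ∀ k : ℤ, k ≠ i → x k = y k), ENNReal.ofReal |f x - f y|

/-- `‖f‖_δ` for a function on the full shift. -/
def enormFull {A : Type*} (f : (ℤ → A) → ℝ) : ℝ≥0∞ := ∑' i : ℤ, oscE f i

/-- `‖f‖_δ` for a function on a subshift `X`: infimum over continuous extensions. -/
def enormOn {A : Type*} [TopologicalSpace A] (X : Set (ℤ → A)) (f : (ℤ → A) → ℝ) : ℝ≥0∞ :=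
  ⨅ (g : (ℤ → A) → ℝ) (_ : Continuous g) (_ : ∀ x ∈ X, g x = f x), enormFull g

/-- `f` has bounded total oscillations on `X` (i.e. `f ∈ B(X)`). -/
def BTO {A : Type*} [TopologicalSpace A] (X : Set (ℤ → A)) (f : (ℤ → A) → ℝ) : Prop :=
  ContinuousOn f X ∧ enormOn X f ≠ ⊤

/-- The real value of `‖f‖_δ`. -/
def dnorm {A : Type*} [TopologicalSpace A] (X : Set (ℤ → A)) (f : (ℤ → A) → ℝ) : ℝ :=
  (enormOn X f).toReal

/-- The pressure `p(φ)`. -/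
def pressure (α β : ℝ) (b : ℕ → ℕ) (φ : (ℤ → ℕ) → ℝ) : ℝ :=
  limUnder atTop fun n : ℕ =>
    Real.log (∑' x : (En α β b n), Real.exp (birkhoff φ n x.1)) / (2 * n + 1)

/-- `ν` is a tangent functional to the pressure at `φ` (an equilibrium measure for `φ`). -/
def IsTangent (α β : ℝ) (b : ℕ → ℕ) (φ : (ℤ → ℕ) → ℝ) (ν : Measure (ℤ → ℕ)) : Prop :=
  ∀ f : (ℤ → ℕ) → ℝ, ContinuousOn f (SigmaAB α β) →
    pressure α β b φ + ∫ x, f x ∂ν ≤ pressure α β b (fun x => φ x + f x)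

/-- The cylinder `[x_1 … x_m]` in `Σ^{α,β}`. -/
def cyl (α β : ℝ) (x : ℤ → ℕ) (m : ℕ) : Set (ℤ → ℕ) :=
  {y ∈ SigmaAB α β | ∀ i : ℕ, 1 ≤ i → i ≤ m → y (i : ℤ) = x (i : ℤ)}

/-- `ν` is a weak Gibbs measure for `ψ` on `Σ^{α,β}`. -/
def WeakGibbs (α β : ℝ) (ν : Measure (ℤ → ℕ)) (ψ : (ℤ → ℕ) → ℝ) : Prop :=
  ∀ δ : ℝ, 0 < δ → ∃ N : ℕ, ∀ m : ℕ, N ≤ m → ∀ x ∈ SigmaAB α β,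
    |Real.log (ν (cyl α β x m)).toReal / m -
      (∑ l ∈ Finset.Icc (1 : ℤ) (m : ℤ), ψ (shiftI l x)) / m| ≤ δ


/-- Concatenation `w·x` of a word and a one-sided sequence. -/
def wordApp (w : List ℕ) (x : ℕ → ℕ) : ℕ → ℕ :=
  fun n => if n < w.length then w.getD n 1 else x (n - w.length)

/-- `σ^k` on one-sided sequences. -/
def shiftN (k : ℕ) (s : ℕ → ℕ) : ℕ → ℕ := fun n => s (k + n)

end AB

namespace AB


private lemma shiftI_one_shiftI {A : Type*} (j : ℤ) (x : ℤ → A) :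
    shiftI 1 (shiftI j x) = shiftI (j + 1) x := by
  funext n; show x (n + 1 + j) = x (n + (j + 1)); congr 1; ring

private lemma shift_mem {A : Type*} [TopologicalSpace A] {X : Set (ℤ → A)}
    (hXinv : ∀ x : ℤ → A, x ∈ X ↔ shiftI 1 x ∈ X) {x : ℤ → A} (hx : x ∈ X) (j : ℤ) :
    shiftI j x ∈ X := by
  have key : ∀ j : ℤ, shiftI j x ∈ X ↔ shiftI (j + 1) x ∈ X := fun j => by
    rw [← shiftI_one_shiftI]; exact hXinv _
  induction j using Int.induction_on with
  | zero =>
      have h0 : shiftI 0 x = x := funext fun n => by show x (n + 0) = x n; rw [add_zero]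
      rwa [h0]
  | succ n ih => exact (key n).mp ih
  | pred n ih =>
      have h1 : (-(n : ℤ) - 1) + 1 = -(n : ℤ) := by ring
      have h2 := key (-(n : ℤ) - 1)
      rw [h1] at h2
      exact h2.mpr ih

private lemma oscA {A : Type*} (g : (ℤ → A) → ℝ) (s : Finset ℤ) :
    ∀ x y : ℤ → A, (∀ k ∉ s, x k = y k) →
      ENNReal.ofReal |g x - g y| ≤ ∑ k ∈ s, oscE g k := by
  induction s using Finset.induction_on with
  | empty =>
      intro x y hxy
      have hxy' : x = y := funext fun k => hxy k (Finset.notMem_empty k)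
      simp [hxy']
  | @insert a t ha ih =>
      intro x y hxy
      set z := Function.update x a (y a) with hz
      have hxz : ENNReal.ofReal |g x - g z| ≤ oscE g a := by
        have h1 : ∀ k : ℤ, k ≠ a → x k = z k := fun k hk =>
          (Function.update_of_ne hk _ _).symm
        show ENNReal.ofReal |g x - g z| ≤
          ⨆ (u : ℤ → A) (v : ℤ → A) (_ : ∀ k : ℤ, k ≠ a → u k = v k), ENNReal.ofReal |g u - g v|
        exact le_iSup_of_le x (le_iSup_of_le z (le_iSup_of_le h1 le_rfl))
      have hzy : ENNReal.ofReal |g z - g y| ≤ ∑ k ∈ t, oscE g k := by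
        apply ih
        intro k hk
        by_cases hka : k = a
        · subst hka; simp [hz]
        · rw [hz, Function.update_of_ne hka]
          exact hxy k (by simp [Finset.mem_insert, hka, hk])
      calc ENNReal.ofReal |g x - g y|
          ≤ ENNReal.ofReal (|g x - g z| + |g z - g y|) :=
            ENNReal.ofReal_le_ofReal (abs_sub_le _ _ _)
        _ ≤ ENNReal.ofReal |g x - g z| + ENNReal.ofReal |g z - g y| := ENNReal.ofReal_add_le
        _ ≤ oscE g a + ∑ k ∈ t, oscE g k := add_le_add hxz hzy
        _ = ∑ k ∈ insert a t, oscE g k := (Finset.sum_insert ha).symm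

private lemma oscB {A : Type*} [TopologicalSpace A] {g : (ℤ → A) → ℝ} (hg : Continuous g)
    (E : Set ℤ) (x y : ℤ → A) (hxy : ∀ k ∉ E, x k = y k) :
    ENNReal.ofReal |g x - g y| ≤ ∑' k : ℤ, E.indicator (oscE g) k := by
  set yN : ℕ → (ℤ → A) := fun n k => if k ∈ Finset.Icc (-(n : ℤ)) (n : ℤ) then y k else x k
    with hyN
  have hconv : Filter.Tendsto yN Filter.atTop (nhds y) := by
    rw [tendsto_pi_nhds]
    intro k
    apply Filter.Tendsto.congr' _ (tendsto_const_nhds (x := y k))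
    filter_upwards [Filter.eventually_ge_atTop k.natAbs] with n hn
    simp only [hyN]
    rw [if_pos (by rw [Finset.mem_Icc]; omega)]
  have h1 : Filter.Tendsto (fun n => g (yN n)) Filter.atTop (nhds (g y)) :=
    (hg.tendsto y).comp hconv
  have h2 : Filter.Tendsto (fun n => |g x - g (yN n)|) Filter.atTop (nhds |g x - g y|) :=
    (tendsto_const_nhds.sub h1).abs
  have hlim := ENNReal.tendsto_ofReal h2
  apply le_of_tendsto hlim
  filter_upwards with n
  have hb := oscA g ((Finset.Icc (-(n : ℤ)) (n : ℤ)).filter (· ∈ E)) x (yN n) ?_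
  · refine hb.trans ?_
    have heq : ∑ k ∈ (Finset.Icc (-(n : ℤ)) (n : ℤ)).filter (· ∈ E), oscE g k
        = ∑ k ∈ (Finset.Icc (-(n : ℤ)) (n : ℤ)).filter (· ∈ E), E.indicator (oscE g) k := by
      apply Finset.sum_congr rfl
      intro k hk
      rw [Set.indicator_of_mem (Finset.mem_filter.mp hk).2]
    rw [heq]
    exact ENNReal.sum_le_tsum _
  · intro k hk
    simp only [hyN]
    by_cases h1' : k ∈ Finset.Icc (-(n : ℤ)) (n : ℤ)
    · rw [if_pos h1']
      by_cases h2' : k ∈ E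
      · exact absurd (Finset.mem_filter.mpr ⟨h1', h2'⟩) hk
      · exact hxy k h2'
    · rw [if_neg h1']

private lemma tailLem (h : ℤ → ℝ≥0∞) (hfin : ∑' k : ℤ, h k ≠ ⊤) {δ : ℝ≥0∞} (hδ0 : δ ≠ 0) (hδt : δ ≠ ⊤) :
    ∃ s : Finset ℤ, ∑' k : ℤ, ((↑s : Set ℤ)ᶜ).indicator h k ≤ δ := by
  set c := ∑' k : ℤ, h k with hc
  rcases eq_or_ne c 0 with h0 | h0
  · refine ⟨∅, ?_⟩
    calc ∑' k : ℤ, ((↑(∅ : Finset ℤ) : Set ℤ)ᶜ).indicator h k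
        ≤ ∑' k : ℤ, h k := ENNReal.tsum_le_tsum fun k => Set.indicator_le_self _ _ k
      _ = 0 := h0
      _ ≤ δ := zero_le
  · have hex : ∃ s : Finset ℤ, c ≤ ∑ k ∈ s, h k + δ := by
      by_contra hcon
      push_neg at hcon
      have hle : c ≤ c - δ := by
        conv_lhs => rw [hc, ENNReal.tsum_eq_iSup_sum]
        exact iSup_le fun s => ENNReal.le_sub_of_add_le_right hδt (hcon s).le
      exact absurd (hle.trans_lt (ENNReal.sub_lt_self hfin h0 hδ0)) (lt_irrefl c)
    obtain ⟨s, hs⟩ := hex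
    refine ⟨s, ?_⟩
    have hsplit : ∑ k ∈ s, h k + ∑' k : ℤ, ((↑s : Set ℤ)ᶜ).indicator h k = c := by
      rw [← tsum_subtype, ← Finset.tsum_subtype' s h]
      exact Summable.tsum_add_tsum_compl ENNReal.summable ENNReal.summable
    have hsne : ∑ k ∈ s, h k ≠ ⊤ :=
      ((ENNReal.sum_le_tsum s).trans_lt (lt_top_iff_ne_top.mpr hfin)).ne
    rw [← hsplit] at hs
    exact (ENNReal.add_le_add_iff_left hsne).mp hs

private lemma tsum_shift (h : ℤ → ℝ≥0∞) (i : ℤ) (P : ℤ → Prop) :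
    ∑' j : {j : ℤ // P j}, h (j.1 - i) = ∑' k : ℤ, Set.indicator {k : ℤ | P (k + i)} h k := by
  rw [← tsum_subtype]
  have key := Equiv.tsum_eq (α := ℝ≥0∞)
    (⟨fun k : {k : ℤ // k ∈ {k : ℤ | P (k + i)}} => (⟨k.1 + i, k.2⟩ : {j : ℤ // P j}),
      fun j => ⟨j.1 - i, by simp only [Set.mem_setOf_eq, sub_add_cancel]; exact j.2⟩,
      fun k => Subtype.ext (add_sub_cancel_right _ _),
      fun j => Subtype.ext (sub_add_cancel _ _)⟩)
    (fun j : {j : ℤ // P j} => h (j.1 - i))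
  rw [← key]
  exact tsum_congr fun k => by
    show h (k.1 + i - i) = h k.1
    rw [add_sub_cancel_right]

private lemma lemC (h : ℤ → ℝ≥0∞) (hfin : ∑' k : ℤ, h k ≠ ⊤) (ε : ℝ) (hε : 0 < ε) :
    ∃ N : ℕ, ∀ m : ℕ, N ≤ m →
      ∑ i ∈ Finset.Icc (1 : ℤ) (m : ℤ),
        (∑' j : {j : ℤ // j < 1 ∨ (m : ℤ) < j}, h (j.1 - i)) ≤ ENNReal.ofReal (m * ε) := by
  set c := ∑' k : ℤ, h k with hc
  set δ := ENNReal.ofReal (ε / 2) with hδ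
  have hδ0 : δ ≠ 0 := (ENNReal.ofReal_pos.mpr (by positivity)).ne'
  obtain ⟨s, hs⟩ := tailLem h hfin hδ0 (by rw [hδ]; exact ENNReal.ofReal_ne_top)
  set R : ℕ := s.sup Int.natAbs with hR
  have hsR : ∀ k ∈ s, k.natAbs ≤ R := fun k hk => Finset.le_sup hk
  set N₀ : ℕ := ⌈(2 * (R : ℝ) * c.toReal) / (ε / 2)⌉₊ with hN0
  refine ⟨max N₀ (2 * R + 1), ?_⟩
  intro m hm
  have hm0 : N₀ ≤ m := le_trans (le_max_left _ _) hm
  have hm1 : 2 * R + 1 ≤ m := le_trans (le_max_right _ _) hm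
  have hterm : ∀ i : ℤ, (∑' j : {j : ℤ // j < 1 ∨ (m : ℤ) < j}, h (j.1 - i)) =
      ∑' k : ℤ, Set.indicator {k : ℤ | k + i < 1 ∨ (m : ℤ) < k + i} h k := fun i =>
    tsum_shift h i _
  have hgood : ∀ i : ℤ, (R : ℤ) < i → i + R ≤ m →
      (∑' j : {j : ℤ // j < 1 ∨ (m : ℤ) < j}, h (j.1 - i)) ≤ δ := by
    intro i h1 h2
    rw [hterm]
    refine le_trans (ENNReal.tsum_le_tsum fun k => ?_) hs
    refine Set.indicator_le_indicator_of_subset ?_ (fun _ => zero_le) k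
    intro k hk
    simp only [Set.mem_setOf_eq] at hk
    simp only [Set.mem_compl_iff, Finset.mem_coe]
    intro hks
    have hna := hsR k hks
    omega
  have hbad : ∀ i : ℤ, (∑' j : {j : ℤ // j < 1 ∨ (m : ℤ) < j}, h (j.1 - i)) ≤ c := by
    intro i
    rw [hterm, hc]
    exact ENNReal.tsum_le_tsum fun k => Set.indicator_le_self _ _ k
  set G : Finset ℤ := Finset.Icc ((R : ℤ) + 1) ((m : ℤ) - R) with hG
  have hGsub : G ⊆ Finset.Icc (1 : ℤ) (m : ℤ) := by
    intro k hk
    rw [hG, Finset.mem_Icc] at hk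
    rw [Finset.mem_Icc]
    omega
  have hcard1 : (Finset.Icc (1 : ℤ) (m : ℤ)).card = m := by
    rw [Int.card_Icc]; omega
  have hcardG : G.card = m - 2 * R := by
    rw [hG, Int.card_Icc]; omega
  have hcardB : (Finset.Icc (1 : ℤ) (m : ℤ) \ G).card = 2 * R := by
    rw [Finset.card_sdiff_of_subset hGsub, hcard1, hcardG]; omega
  have hsplit : Finset.Icc (1 : ℤ) (m : ℤ) = G ∪ (Finset.Icc (1 : ℤ) (m : ℤ) \ G) :=
    (Finset.union_sdiff_of_subset hGsub).symm
  have hmδ : (m : ℝ≥0∞) * δ = ENNReal.ofReal ((m : ℝ) * (ε / 2)) := by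
    rw [hδ, ENNReal.ofReal_mul (by positivity), ENNReal.ofReal_natCast]
  have hRc : ((2 * R : ℕ) : ℝ≥0∞) * c ≤ ENNReal.ofReal ((m : ℝ) * (ε / 2)) := by
    have hc' : c = ENNReal.ofReal c.toReal := (ENNReal.ofReal_toReal hfin).symm
    rw [hc', ← ENNReal.ofReal_natCast (2 * R), ← ENNReal.ofReal_mul (by positivity)]
    apply ENNReal.ofReal_le_ofReal
    have hceil := Nat.le_ceil ((2 * (R : ℝ) * c.toReal) / (ε / 2))
    rw [div_le_iff₀ (by positivity)] at hceil
    calc ((2 * R : ℕ) : ℝ) * c.toReal = 2 * (R : ℝ) * c.toReal := by push_cast; ring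
      _ ≤ (N₀ : ℝ) * (ε / 2) := hceil
      _ ≤ (m : ℝ) * (ε / 2) := by
          apply mul_le_mul_of_nonneg_right _ (by positivity)
          exact_mod_cast hm0
  calc ∑ i ∈ Finset.Icc (1 : ℤ) (m : ℤ),
        (∑' j : {j : ℤ // j < 1 ∨ (m : ℤ) < j}, h (j.1 - i))
      = ∑ i ∈ G, (∑' j : {j : ℤ // j < 1 ∨ (m : ℤ) < j}, h (j.1 - i)) +
        ∑ i ∈ Finset.Icc (1 : ℤ) (m : ℤ) \ G,
          (∑' j : {j : ℤ // j < 1 ∨ (m : ℤ) < j}, h (j.1 - i)) := by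
        conv_lhs => rw [hsplit]
        exact Finset.sum_union Finset.disjoint_sdiff
    _ ≤ ∑ _i ∈ G, δ + ∑ _i ∈ Finset.Icc (1 : ℤ) (m : ℤ) \ G, c := by
        apply add_le_add
        · apply Finset.sum_le_sum
          intro i hi
          rw [hG, Finset.mem_Icc] at hi
          exact hgood i (by omega) (by omega)
        · exact Finset.sum_le_sum fun i _ => hbad i
    _ = (G.card : ℝ≥0∞) * δ + (((Finset.Icc (1 : ℤ) (m : ℤ) \ G).card : ℕ) : ℝ≥0∞) * c := by
        rw [Finset.sum_const, Finset.sum_const, nsmul_eq_mul, nsmul_eq_mul]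
    _ ≤ (m : ℝ≥0∞) * δ + ((2 * R : ℕ) : ℝ≥0∞) * c := by
        apply add_le_add
        · exact mul_le_mul_left (by exact_mod_cast Nat.cast_le.mpr (hcardG ▸ Nat.sub_le m (2 * R))) δ
        · rw [hcardB]
    _ ≤ ENNReal.ofReal ((m : ℝ) * (ε / 2)) + ENNReal.ofReal ((m : ℝ) * (ε / 2)) :=
        add_le_add (le_of_eq hmδ) hRc
    _ = ENNReal.ofReal ((m : ℝ) * ε) := by
        rw [← ENNReal.ofReal_add (by positivity) (by positivity)]
        congr 1; ring

/-- uniform smallness estimates for functions of bounded total oscillations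
on a subshift over a finite alphabet. -/
theorem stmt12 (A : Type*) [Fintype A] [TopologicalSpace A] [DiscreteTopology A]
    (X : Set (ℤ → A)) (hXcl : IsClosed X)
    (hXinv : ∀ x : ℤ → A, x ∈ X ↔ shiftI 1 x ∈ X)
    (f : (ℤ → A) → ℝ) (hf : BTO X f)
    (ε : ℝ) (hε : 0 < ε) :
    ∃ N : ℕ, ∀ m : ℕ, N ≤ m →
      (∀ x ∈ X, ∀ y ∈ X, (∀ k : ℤ, 1 ≤ k → k ≤ (m : ℤ) → x k = y k) →
        ∑ i ∈ Finset.Icc (1 : ℤ) (m : ℤ),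
          |f (shiftI i x) - f (shiftI i y)| ≤ m * ε) ∧
      (∀ x ∈ X, ∀ y ∈ X, (∀ k : ℤ, k < 1 ∨ (m : ℤ) < k → x k = y k) →
        ∑' j : {j : ℤ // j < 1 ∨ (m : ℤ) < j},
          ENNReal.ofReal |f (shiftI j.1 x) - f (shiftI j.1 y)| ≤ ENNReal.ofReal (m * ε)) := by
  obtain ⟨hfc, hne⟩ := hf
  have hlt : enormOn X f < ⊤ := lt_top_iff_ne_top.mpr hne
  simp only [enormOn] at hlt
  rw [iInf_lt_iff] at hlt
  obtain ⟨g, hlt⟩ := hlt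
  rw [iInf_lt_iff] at hlt
  obtain ⟨hgc, hlt⟩ := hlt
  rw [iInf_lt_iff] at hlt
  obtain ⟨hgf, hgfin⟩ := hlt
  have hosc : ∑' k : ℤ, oscE g k ≠ ⊤ := by
    simpa [enormFull] using hgfin.ne
  have hosc2 : ∑' k : ℤ, oscE g (-k) ≠ ⊤ := by
    have heq : ∑' k : ℤ, oscE g (-k) = ∑' k : ℤ, oscE g k := (Equiv.neg ℤ).tsum_eq (oscE g)
    rw [heq]; exact hosc
  obtain ⟨N₁, hN₁⟩ := lemC (oscE g) hosc ε hε
  obtain ⟨N₂, hN₂⟩ := lemC (fun k => oscE g (-k)) hosc2 ε hε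
  refine ⟨max N₁ N₂, fun m hm => ⟨?_, ?_⟩⟩
  · intro x hx y hy hxy
    have key : ∀ i ∈ Finset.Icc (1 : ℤ) (m : ℤ),
        ENNReal.ofReal |f (shiftI i x) - f (shiftI i y)| ≤
          ∑' j : {j : ℤ // j < 1 ∨ (m : ℤ) < j}, oscE g (j.1 - i) := by
      intro i _
      rw [← hgf _ (shift_mem hXinv hx i), ← hgf _ (shift_mem hXinv hy i), tsum_shift]
      apply oscB hgc
      intro k hk
      simp only [Set.mem_setOf_eq, not_or, not_lt] at hk
      show x (k + i) = y (k + i)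
      exact hxy _ hk.1 hk.2
    have h1 : ENNReal.ofReal (∑ i ∈ Finset.Icc (1 : ℤ) (m : ℤ),
        |f (shiftI i x) - f (shiftI i y)|) ≤ ENNReal.ofReal (m * ε) := by
      rw [ENNReal.ofReal_sum_of_nonneg (fun i _ => abs_nonneg _)]
      exact le_trans (Finset.sum_le_sum key) (hN₁ m (le_trans (le_max_left _ _) hm))
    have hnn : (0 : ℝ) ≤ m * ε := by positivity
    exact (ENNReal.ofReal_le_ofReal_iff hnn).mp h1
  · intro x hx y hy hxy
    have key : ∀ j : {j : ℤ // j < 1 ∨ (m : ℤ) < j},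
        ENNReal.ofReal |f (shiftI j.1 x) - f (shiftI j.1 y)| ≤
          ∑ l ∈ Finset.Icc (1 : ℤ) (m : ℤ), oscE g (l - j.1) := by
      intro j
      rw [← hgf _ (shift_mem hXinv hx j.1), ← hgf _ (shift_mem hXinv hy j.1)]
      have hb := oscB hgc {k : ℤ | 1 ≤ k + j.1 ∧ k + j.1 ≤ (m : ℤ)}
        (shiftI j.1 x) (shiftI j.1 y) ?_
      · refine hb.trans (le_of_eq ?_)
        have hset : {k : ℤ | 1 ≤ k + j.1 ∧ k + j.1 ≤ (m : ℤ)} =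
            ↑(Finset.Icc (1 - j.1) ((m : ℤ) - j.1)) := by
          ext k
          simp only [Set.mem_setOf_eq, Finset.coe_Icc, Set.mem_Icc]
          omega
        rw [hset, ← tsum_subtype, Finset.tsum_subtype']
        have hmap : Finset.Icc (1 - j.1) ((m : ℤ) - j.1) =
            (Finset.Icc (1 : ℤ) (m : ℤ)).map (addRightEmbedding (-j.1)) := by
          rw [Finset.map_add_right_Icc]; congr 1 <;> ring
        rw [hmap, Finset.sum_map]
        apply Finset.sum_congr rfl
        intro l _
        show oscE g (l + -j.1) = oscE g (l - j.1)
        rw [← sub_eq_add_neg]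
      · intro k hk
        simp only [Set.mem_setOf_eq, not_and_or, not_le] at hk
        show x (k + j.1) = y (k + j.1)
        apply hxy
        rcases hk with h' | h'
        · left; omega
        · right; omega
    calc ∑' j : {j : ℤ // j < 1 ∨ (m : ℤ) < j},
          ENNReal.ofReal |f (shiftI j.1 x) - f (shiftI j.1 y)|
        ≤ ∑' j : {j : ℤ // j < 1 ∨ (m : ℤ) < j},
            ∑ l ∈ Finset.Icc (1 : ℤ) (m : ℤ), oscE g (l - j.1) :=
          ENNReal.tsum_le_tsum key
      _ = ∑ l ∈ Finset.Icc (1 : ℤ) (m : ℤ),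
            ∑' j : {j : ℤ // j < 1 ∨ (m : ℤ) < j}, oscE g (l - j.1) :=
          Summable.tsum_finsetSum fun _ _ => ENNReal.summable
      _ = ∑ l ∈ Finset.Icc (1 : ℤ) (m : ℤ),
            ∑' j : {j : ℤ // j < 1 ∨ (m : ℤ) < j}, (fun k => oscE g (-k)) (j.1 - l) := by
          apply Finset.sum_congr rfl
          intro l _
          apply tsum_congr
          intro j
          show oscE g (l - j.1) = oscE g (-(j.1 - l))
          rw [neg_sub]
      _ ≤ ENNReal.ofReal (m * ε) := hN₂ m (le_trans (le_max_right _ _) hm)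


end AB
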